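/- Suppose strict feasibility fails for the nonempty spectrahedron F = {X ⪰ 0 : A(X) = b} (there is no X ≻ 0 with A(X) = b). Then every point of F is degenerate. -/

import Mathlib

open Matrix Set

noncomputable section

/-- The linear map `A X = (⟨Aᵢ, X⟩)ᵢ` (trace inner product). -/
def calA {n m : ℕ} (A : Fin m → Matrix (Fin n) (Fin n) ℝ)
    (X : Matrix (Fin n) (Fin n) ℝ) : Fin m → ℝ := fun i => (A i * X).trace

/-- The adjoint map `A* λ = ∑ᵢ λᵢ Aᵢ`. -/
def adjA {n m : ℕ} (A : Fin m → Matrix (Fin n) (Fin n) ℝ) (lam : Fin m → ℝ) :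
    Matrix (Fin n) (Fin n) ℝ := ∑ i, lam i • A i

/-- The spectrahedron `F = {X ⪰ 0 : A X = b}`. -/
def spectra {n m : ℕ} (A : Fin m → Matrix (Fin n) (Fin n) ℝ) (b : Fin m → ℝ) :
    Set (Matrix (Fin n) (Fin n) ℝ) := {X | X.PosSemidef ∧ calA A X = b}

/-- The PSD cone `Sⁿ₊` as a subset of matrix space. -/
def PSDcone (n : ℕ) : Set (Matrix (Fin n) (Fin n) ℝ) := {Y | Y.PosSemidef}

/-- `f` is a face of the convex cone `K`. -/
def IsFaceOfCone {k : ℕ} (f K : Set (Matrix (Fin k) (Fin k) ℝ)) : Prop :=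
  f ⊆ K ∧ Convex ℝ f ∧ (∀ c : ℝ, 0 ≤ c → ∀ x ∈ f, c • x ∈ f) ∧
    ∀ x ∈ K, ∀ y ∈ K, x + y ∈ f → x ∈ f ∧ y ∈ f

/-- `face(X, Sⁿ₊)`: the minimal face of `Sⁿ₊` containing `X`, i.e. the intersection of
all faces of `Sⁿ₊` containing `X`. -/
def minFaceOfPoint {n : ℕ} (X : Matrix (Fin n) (Fin n) ℝ) :
    Set (Matrix (Fin n) (Fin n) ℝ) :=
  ⋂₀ {g | IsFaceOfCone g (PSDcone n) ∧ X ∈ g}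

/-- The conjugate face `f^Δ = f^⊥ ∩ Sⁿ₊` of a subset `f` of `Sⁿ₊`. -/
def conjFace {n : ℕ} (f : Set (Matrix (Fin n) (Fin n) ℝ)) :
    Set (Matrix (Fin n) (Fin n) ℝ) :=
  {Z | Z.PosSemidef ∧ ∀ Y ∈ f, (Y * Z).trace = 0}

/-- `X` is a nondegenerate point: `span(face(X,Sⁿ₊)^Δ) ∩ range(A*) = {0}`. -/
def Nondegenerate {n m : ℕ} (A : Fin m → Matrix (Fin n) (Fin n) ℝ)
    (X : Matrix (Fin n) (Fin n) ℝ) : Prop :=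
  Submodule.span ℝ (conjFace (minFaceOfPoint X)) ⊓ Submodule.span ℝ (Set.range A) = ⊥

namespace Stmt11Aux

variable {n m : ℕ}

lemma herm_of_symm {M : Matrix (Fin n) (Fin n) ℝ} (h : M.IsSymm) : M.IsHermitian := by
  rwa [Matrix.IsHermitian, Matrix.conjTranspose_eq_transpose_of_trivial]

lemma herm_smul_real {M : Matrix (Fin n) (Fin n) ℝ} (h : M.IsHermitian) (c : ℝ) :
    (c • M).IsHermitian := by
  rw [Matrix.IsHermitian, Matrix.conjTranspose_smul, h.eq]; simp

lemma star_pi (x : Fin n → ℝ) : star x = x := by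
  funext i; simp

lemma diag_nonneg {M : Matrix (Fin n) (Fin n) ℝ} (h : M.PosSemidef) (i : Fin n) : 0 ≤ M i i := by
  have := h.dotProduct_mulVec_nonneg (Pi.single i 1)
  rw [star_pi] at this
  simpa [dotProduct, Matrix.mulVec, Pi.single_apply, mul_ite, ite_mul] using this

lemma trace_nonneg_psd {M : Matrix (Fin n) (Fin n) ℝ} (h : M.PosSemidef) : 0 ≤ M.trace :=
  Finset.sum_nonneg fun i _ => diag_nonneg h i

open scoped MatrixOrder in
lemma trace_mul_nonneg {X Z : Matrix (Fin n) (Fin n) ℝ} (hX : X.PosSemidef)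
    (hZ : Z.PosSemidef) : 0 ≤ (X * Z).trace := by
  have hZ0 : 0 ≤ Z := Matrix.nonneg_iff_posSemidef.mpr hZ
  have hS : (CFC.sqrt Z).PosSemidef := Matrix.nonneg_iff_posSemidef.mp (CFC.sqrt_nonneg Z)
  have h1 : X * Z = X * CFC.sqrt Z * CFC.sqrt Z := by
    rw [Matrix.mul_assoc, CFC.sqrt_mul_sqrt_self Z hZ0]
  have h2 : (X * CFC.sqrt Z * CFC.sqrt Z).trace = (CFC.sqrt Z * X * CFC.sqrt Z).trace := by
    rw [Matrix.trace_mul_cycle]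
  have h3 : (CFC.sqrt Z * X * CFC.sqrt Z).PosSemidef := by
    have := hX.conjTranspose_mul_mul_same (CFC.sqrt Z)
    rwa [hS.1] at this
  rw [h1, h2]
  exact trace_nonneg_psd h3

lemma psd_smul {M : Matrix (Fin n) (Fin n) ℝ} (h : M.PosSemidef) {c : ℝ} (hc : 0 ≤ c) :
    (c • M).PosSemidef := by
  refine Matrix.PosSemidef.of_dotProduct_mulVec_nonneg ?_ fun x => ?_
  · rw [Matrix.IsHermitian, Matrix.conjTranspose_smul, h.1]; simp
  · rw [Matrix.smul_mulVec, dotProduct_smul, smul_eq_mul]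
    exact mul_nonneg hc (h.dotProduct_mulVec_nonneg x)

lemma pd_smul {M : Matrix (Fin n) (Fin n) ℝ} (h : M.PosDef) {c : ℝ} (hc : 0 < c) :
    (c • M).PosDef := by
  refine Matrix.PosDef.of_dotProduct_mulVec_pos ?_ fun x hx => ?_
  · rw [Matrix.IsHermitian, Matrix.conjTranspose_smul, h.1]; simp
  · rw [Matrix.smul_mulVec, dotProduct_smul, smul_eq_mul]
    exact mul_pos hc (h.dotProduct_mulVec_pos hx)

lemma vecMulVec_mulVec (x y : Fin n → ℝ) :
    (Matrix.vecMulVec x x) *ᵥ y = (x ⬝ᵥ y) • x := by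
  funext i
  simp only [Matrix.mulVec, dotProduct, Matrix.vecMulVec_apply, Pi.smul_apply,
    smul_eq_mul, Finset.sum_mul]
  exact Finset.sum_congr rfl fun j _ => by ring

lemma psd_vecMulVec (x : Fin n → ℝ) : (Matrix.vecMulVec x x).PosSemidef := by
  refine Matrix.PosSemidef.of_dotProduct_mulVec_nonneg ?_ ?_
  · rw [Matrix.IsHermitian, Matrix.conjTranspose_eq_transpose_of_trivial]
    ext i j
    simp [Matrix.vecMulVec_apply, mul_comm]
  · intro y
    have h1 : (Matrix.vecMulVec x x) *ᵥ y = (x ⬝ᵥ y) • x := vecMulVec_mulVec x y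
    rw [star_pi, h1, dotProduct_smul, smul_eq_mul, dotProduct_comm]
    exact mul_self_nonneg _

lemma trace_mul_vecMulVec (M : Matrix (Fin n) (Fin n) ℝ) (x : Fin n → ℝ) :
    (M * Matrix.vecMulVec x x).trace = x ⬝ᵥ M *ᵥ x := by
  simp only [Matrix.trace, Matrix.diag, Matrix.mul_apply, Matrix.vecMulVec_apply,
    dotProduct, Matrix.mulVec, Finset.mul_sum]
  exact Finset.sum_congr rfl fun i _ => Finset.sum_congr rfl fun j _ => by ring

lemma mem_conjFace_minFace {X Z : Matrix (Fin n) (Fin n) ℝ} (hX : X.PosSemidef)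
    (hZ : Z.PosSemidef) (hXZ : (X * Z).trace = 0) :
    Z ∈ conjFace (minFaceOfPoint X) := by
  refine ⟨hZ, fun Y hY => ?_⟩
  have hmem : {W : Matrix (Fin n) (Fin n) ℝ | W.PosSemidef ∧ (W * Z).trace = 0} ∈
      {g | IsFaceOfCone g (PSDcone n) ∧ X ∈ g} := by
    constructor
    · refine ⟨fun W hW => hW.1, ?_, ?_, ?_⟩
      · intro W₁ h₁ W₂ h₂ a b ha hb hab
        refine ⟨(psd_smul h₁.1 ha).add (psd_smul h₂.1 hb), ?_⟩
        rw [Matrix.add_mul, Matrix.smul_mul, Matrix.smul_mul, Matrix.trace_add,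
          Matrix.trace_smul, Matrix.trace_smul, h₁.2, h₂.2]
        simp
      · intro c hc W hW
        refine ⟨psd_smul hW.1 hc, ?_⟩
        rw [Matrix.smul_mul, Matrix.trace_smul, hW.2]; simp
      · intro x hx y hy hxy
        have h₁ := trace_mul_nonneg hx hZ
        have h₂ := trace_mul_nonneg hy hZ
        have h₃ : (x * Z).trace + (y * Z).trace = 0 := by
          rw [← Matrix.trace_add, ← Matrix.add_mul]; exact hxy.2
        exact ⟨⟨hx, by linarith⟩, ⟨hy, by linarith⟩⟩
    · exact ⟨hX, hXZ⟩
  exact (hY _ hmem).2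

lemma sum_sq_pos {x : Fin n → ℝ} (hx : x ≠ 0) : 0 < ∑ i, x i ^ 2 := by
  obtain ⟨i, hi⟩ : ∃ i, x i ≠ 0 := by
    by_contra h; push_neg at h; exact hx (funext h)
  exact Finset.sum_pos' (fun j _ => sq_nonneg _)
    ⟨i, Finset.mem_univ i, by positivity⟩

lemma quad_abs_le (E : Matrix (Fin n) (Fin n) ℝ) (x : Fin n → ℝ) :
    |x ⬝ᵥ E *ᵥ x| ≤ (∑ i, ∑ j, |E i j|) * ∑ k, x k ^ 2 := by
  set S := ∑ k, x k ^ 2 with hS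
  have hxk : ∀ k, x k ^ 2 ≤ S := fun k =>
    Finset.single_le_sum (fun j _ => sq_nonneg (x j)) (Finset.mem_univ k)
  have h1 : x ⬝ᵥ E *ᵥ x = ∑ i, ∑ j, x i * (E i j * x j) := by
    simp [dotProduct, Matrix.mulVec, Finset.mul_sum]
  rw [h1]
  calc |∑ i, ∑ j, x i * (E i j * x j)| ≤ ∑ i, |∑ j, x i * (E i j * x j)| :=
        Finset.abs_sum_le_sum_abs _ _
    _ ≤ ∑ i, ∑ j, |x i * (E i j * x j)| :=
        Finset.sum_le_sum fun i _ => Finset.abs_sum_le_sum_abs _ _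
    _ ≤ ∑ i, ∑ j, |E i j| * S := by
        refine Finset.sum_le_sum fun i _ => Finset.sum_le_sum fun j _ => ?_
        have habs : |x i * (E i j * x j)| = |E i j| * (|x i| * |x j|) := by
          rw [abs_mul, abs_mul]; ring
        rw [habs]
        refine mul_le_mul_of_nonneg_left ?_ (abs_nonneg _)
        nlinarith [sq_nonneg (|x i| - |x j|), sq_abs (x i), sq_abs (x j), hxk i, hxk j]
    _ = (∑ i, ∑ j, |E i j|) * S := by
        rw [Finset.sum_mul]
        exact Finset.sum_congr rfl fun i _ => by rw [Finset.sum_mul]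

lemma posdef_lower {Y : Matrix (Fin n) (Fin n) ℝ} (hY : Y.PosDef) :
    ∃ μ > 0, ∀ x : Fin n → ℝ, μ * ∑ i, x i ^ 2 ≤ x ⬝ᵥ Y *ᵥ x := by
  rcases Nat.eq_zero_or_pos n with hn | hn
  · refine ⟨1, one_pos, fun x => ?_⟩
    subst hn
    simp [dotProduct]
  · set K : Set (Fin n → ℝ) := {x | ∑ i, x i ^ 2 = 1} with hK
    have hcont : Continuous fun x : Fin n → ℝ => ∑ i, x i ^ 2 := by fun_prop
    have hKc : IsCompact K := by
      apply Metric.isCompact_of_isClosed_isBounded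
      · exact isClosed_eq hcont continuous_const
      · rw [Metric.isBounded_iff_subset_closedBall 0]
        refine ⟨1, fun x hx => ?_⟩
        simp only [Metric.mem_closedBall, dist_zero_right]
        rw [pi_norm_le_iff_of_nonneg zero_le_one]
        intro i
        have h2 : x i ^ 2 ≤ 1 := by
          have := Finset.single_le_sum (fun j _ => sq_nonneg (x j)) (Finset.mem_univ i)
          rw [hx] at this; exact this
        have hni : ‖x i‖ = |x i| := rfl
        rw [hni]
        nlinarith [abs_nonneg (x i), sq_abs (x i)]
    have hKne : K.Nonempty := by
      refine ⟨Pi.single ⟨0, hn⟩ 1, ?_⟩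
      simp [hK, Pi.single_apply]
    have hfc : Continuous fun x : Fin n → ℝ => x ⬝ᵥ Y *ᵥ x := by
      simp only [dotProduct, Matrix.mulVec]
      fun_prop
    obtain ⟨u, huK, hmin⟩ := hKc.exists_isMinOn hKne hfc.continuousOn
    have hu0 : u ≠ 0 := by
      intro h
      rw [hK] at huK
      simp only [Set.mem_setOf_eq, h] at huK
      simp at huK
    have hupos : 0 < u ⬝ᵥ Y *ᵥ u := by
      have := hY.dotProduct_mulVec_pos hu0
      rwa [star_pi] at this
    refine ⟨u ⬝ᵥ Y *ᵥ u, hupos, fun x => ?_⟩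
    by_cases hx : x = 0
    · subst hx; simp
    · set r := Real.sqrt (∑ i, x i ^ 2) with hr
      have hsum := sum_sq_pos hx
      have hrpos : 0 < r := Real.sqrt_pos.mpr hsum
      have hr2 : r ^ 2 = ∑ i, x i ^ 2 := Real.sq_sqrt hsum.le
      have hyK : (r⁻¹ • x) ∈ K := by
        simp only [hK, Set.mem_setOf_eq, Pi.smul_apply, smul_eq_mul, mul_pow, ← Finset.mul_sum]
        rw [← hr2]
        field_simp
      have hle : u ⬝ᵥ Y *ᵥ u ≤ (r⁻¹ • x) ⬝ᵥ Y *ᵥ (r⁻¹ • x) := hmin hyK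
      have hval : (r⁻¹ • x) ⬝ᵥ Y *ᵥ (r⁻¹ • x) = r⁻¹ * (r⁻¹ * (x ⬝ᵥ Y *ᵥ x)) := by
        rw [Matrix.mulVec_smul, smul_dotProduct, dotProduct_smul]
        simp [smul_eq_mul]
      rw [hval] at hle
      have hkey : (r * r) * (r⁻¹ * (r⁻¹ * (x ⬝ᵥ Y *ᵥ x))) = x ⬝ᵥ Y *ᵥ x := by
        field_simp
      have h2 := mul_le_mul_of_nonneg_left hle (mul_pos hrpos hrpos).le
      rw [hkey] at h2
      calc (u ⬝ᵥ Y *ᵥ u) * ∑ i, x i ^ 2 = (r * r) * (u ⬝ᵥ Y *ᵥ u) := by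
            rw [← hr2]; ring
        _ ≤ x ⬝ᵥ Y *ᵥ x := h2

lemma herm_sum_smul {A : Fin m → Matrix (Fin n) (Fin n) ℝ} (hA : ∀ i, (A i).IsSymm)
    (c : Fin m → ℝ) : (∑ j, c j • A j).IsHermitian := by
  rw [Matrix.IsHermitian, Matrix.conjTranspose_sum]
  refine Finset.sum_congr rfl fun j _ => ?_
  rw [Matrix.conjTranspose_smul, Matrix.conjTranspose_eq_transpose_of_trivial, (hA j)]
  simp

lemma calA_add (A : Fin m → Matrix (Fin n) (Fin n) ℝ) (X Y : Matrix (Fin n) (Fin n) ℝ) :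
    calA A (X + Y) = calA A X + calA A Y := by
  funext i; simp [calA, Matrix.mul_add]

lemma calA_smul (A : Fin m → Matrix (Fin n) (Fin n) ℝ) (c : ℝ) (X : Matrix (Fin n) (Fin n) ℝ) :
    calA A (c • X) = c • calA A X := by
  funext i; simp [calA, Matrix.mul_smul]

lemma gram_isUnit (A : Fin m → Matrix (Fin n) (Fin n) ℝ) (hA : ∀ i, (A i).IsSymm)
    (hLI : LinearIndependent ℝ A) :
    IsUnit (Matrix.of (fun i j => ((A i) * (A j)).trace) : Matrix (Fin m) (Fin m) ℝ) := by
  set G : Matrix (Fin m) (Fin m) ℝ := Matrix.of (fun i j => ((A i) * (A j)).trace) with hG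
  rw [← Matrix.mulVec_injective_iff_isUnit]
  have hker : ∀ c : Fin m → ℝ, G *ᵥ c = 0 → c = 0 := by
    intro c hc
    set M : Matrix (Fin n) (Fin n) ℝ := ∑ j, c j • A j with hM
    have h1 : (M * M).trace = c ⬝ᵥ (G *ᵥ c) := by
      rw [hM, Finset.sum_mul]
      rw [Matrix.trace_sum]
      simp only [Matrix.smul_mul, Matrix.mul_sum, Matrix.mul_smul, Matrix.trace_smul,
        Matrix.trace_sum, smul_eq_mul, Finset.mul_sum, dotProduct, Matrix.mulVec, hG,
        Matrix.of_apply]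
      exact Finset.sum_congr rfl fun i _ => Finset.sum_congr rfl fun j _ => by ring
    rw [hc] at h1
    simp only [dotProduct_zero] at h1
    have hMsym : ∀ i j, M j i = M i j := by
      intro i j
      simp only [hM, Matrix.sum_apply, Matrix.smul_apply, smul_eq_mul]
      refine Finset.sum_congr rfl fun k _ => ?_
      rw [(hA k).apply]
    have h2 : (M * M).trace = ∑ i, ∑ j, (M i j) ^ 2 := by
      simp only [Matrix.trace, Matrix.diag, Matrix.mul_apply]
      exact Finset.sum_congr rfl fun i _ => Finset.sum_congr rfl fun j _ => by
        rw [hMsym i j]; ring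
    rw [h2] at h1
    have h3 : ∀ i ∈ Finset.univ, (∑ j, (M i j) ^ 2) = 0 := by
      rw [← Finset.sum_eq_zero_iff_of_nonneg]
      · exact h1
      · intro i _
        exact Finset.sum_nonneg fun j _ => sq_nonneg _
    have hM0 : M = 0 := by
      ext i j
      have h4 := (Finset.sum_eq_zero_iff_of_nonneg (fun j _ => sq_nonneg (M i j))).mp
        (h3 i (Finset.mem_univ i)) j (Finset.mem_univ j)
      have := sq_eq_zero_iff.mp h4
      simpa using this
    have h5 := Fintype.linearIndependent_iff.mp hLI c (by rw [← hM]; exact hM0)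
    funext i; exact h5 i
  intro c₁ c₂ h
  have h6 : G *ᵥ (c₁ - c₂) = 0 := by
    rw [Matrix.mulVec_sub, h, sub_self]
  have := hker _ h6
  exact sub_eq_zero.mp this

end Stmt11Aux

open Stmt11Aux in
/-- if strict feasibility fails for the nonempty spectrahedron `F`, then
every point of `F` is degenerate. -/
theorem stmt11 {n m : ℕ} (A : Fin m → Matrix (Fin n) (Fin n) ℝ)
    (hA : ∀ i, (A i).IsSymm) (hLI : LinearIndependent ℝ A) (b : Fin m → ℝ)
    (hFne : (spectra A b).Nonempty)
    (hnostrict : ¬ ∃ X : Matrix (Fin n) (Fin n) ℝ, X.PosDef ∧ calA A X = b) :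
    ∀ X ∈ spectra A b, ¬ Nondegenerate A X := by
  classical
  intro X hXmem hND
  obtain ⟨hXpsd, hXb⟩ := hXmem
  -- Gram matrix and right inverse of calA
  set G : Matrix (Fin m) (Fin m) ℝ := Matrix.of (fun i j => ((A i) * (A j)).trace) with hGdef
  have hGunit : IsUnit G := gram_isUnit A hA hLI
  have hGdet : IsUnit G.det := (Matrix.isUnit_iff_isUnit_det G).mp hGunit
  set R : (Fin m → ℝ) → Matrix (Fin n) (Fin n) ℝ :=
    fun v => ∑ j, (G⁻¹ *ᵥ v) j • A j with hRdef
  have hRcal : ∀ v, calA A (R v) = v := by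
    intro v; funext i
    have h1 : calA A (R v) i = ∑ j, (G⁻¹ *ᵥ v) j * ((A i) * (A j)).trace := by
      simp [calA, hRdef, Matrix.mul_sum, Matrix.mul_smul]
    rw [h1]
    have h2 : ∑ j, (G⁻¹ *ᵥ v) j * ((A i) * (A j)).trace = (G *ᵥ (G⁻¹ *ᵥ v)) i := by
      simp only [Matrix.mulVec, dotProduct, hGdef, Matrix.of_apply]
      exact Finset.sum_congr rfl fun j _ => by ring
    rw [h2, Matrix.mulVec_mulVec, Matrix.mul_nonsing_inv _ hGdet, Matrix.one_mulVec]
  have hRherm : ∀ v, (R v).IsHermitian := fun v => herm_sum_smul hA _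
  -- The image of the PD cone
  set C : Set (Fin m → ℝ) :=
    {v | ∃ Y : Matrix (Fin n) (Fin n) ℝ, Y.PosDef ∧ calA A Y = v} with hCdef
  have hCconv : Convex ℝ C := by
    rintro v₁ ⟨Y₁, hY₁, rfl⟩ v₂ ⟨Y₂, hY₂, rfl⟩ a c ha hc hac
    refine ⟨a • Y₁ + c • Y₂, Matrix.PosDef.of_dotProduct_mulVec_pos ?_ ?_, ?_⟩
    · exact (herm_smul_real hY₁.1 a).add (herm_smul_real hY₂.1 c)
    · intro x hx
      rw [star_pi, Matrix.add_mulVec, Matrix.smul_mulVec, Matrix.smul_mulVec,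
        dotProduct_add, dotProduct_smul, dotProduct_smul,
        smul_eq_mul, smul_eq_mul]
      have h₁ := hY₁.dotProduct_mulVec_pos hx; have h₂ := hY₂.dotProduct_mulVec_pos hx
      rw [star_pi] at h₁ h₂
      rcases eq_or_lt_of_le ha with h | h
      · have hc1 : c = 1 := by linarith
        rw [← h, hc1]; simpa using h₂
      · nlinarith [mul_pos h h₁, mul_nonneg hc h₂.le]
    · rw [calA_add, calA_smul, calA_smul]
  have hCopen : IsOpen C := by
    rw [isOpen_iff_mem_nhds]
    rintro c ⟨Y, hY, hYc⟩
    obtain ⟨μ, hμ, hlow⟩ := posdef_lower hY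
    set h : (Fin m → ℝ) → ℝ := fun v => ∑ i, ∑ j, |(R (v - c)) i j| with hhdef
    have hhcont : Continuous h := by
      apply continuous_finset_sum; intro i _
      apply continuous_finset_sum; intro j _
      apply Continuous.abs
      have heq : (fun v : Fin m → ℝ => (R (v - c)) i j) =
          fun v : Fin m → ℝ => ∑ k, (∑ l, G⁻¹ k l * (v l - c l)) * A k i j := by
        funext v
        simp [hRdef, Matrix.sum_apply, Matrix.mulVec, dotProduct]
      rw [heq]
      fun_prop
    have hc0 : h c = 0 := by
      simp [hhdef, hRdef]
    have hUopen : IsOpen {v : Fin m → ℝ | h v < μ} := isOpen_lt hhcont continuous_const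
    have hcU : c ∈ {v : Fin m → ℝ | h v < μ} := by
      simp only [Set.mem_setOf_eq, hc0]; exact hμ
    refine Filter.mem_of_superset (hUopen.mem_nhds hcU) ?_
    intro v hv
    refine ⟨Y + R (v - c), Matrix.PosDef.of_dotProduct_mulVec_pos (hY.1.add (hRherm _)) ?_, ?_⟩
    · intro x hx
      rw [star_pi, Matrix.add_mulVec, dotProduct_add]
      have h1 := hlow x
      have h3 : 0 < ∑ k, x k ^ 2 := sum_sq_pos hx
      have h4 : |x ⬝ᵥ (R (v - c)) *ᵥ x| ≤ h v * ∑ k, x k ^ 2 := quad_abs_le (R (v - c)) x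
      have h5 : h v < μ := hv
      nlinarith [(abs_le.mp h4).1, mul_pos (sub_pos.mpr h5) h3]
    · rw [calA_add, hRcal, hYc]
      funext i; simp
  have hbC : b ∉ C := fun ⟨Y, hY, hYb⟩ => hnostrict ⟨Y, hY, hYb⟩
  obtain ⟨f, hf⟩ := geometric_hahn_banach_open_point hCconv hCopen hbC
  set lam : Fin m → ℝ := fun i => f (Pi.single i 1) with hlam
  have hfrep : ∀ v : Fin m → ℝ, f v = ∑ i, v i * lam i := by
    intro v
    have hv : v = ∑ i, Pi.single i (v i) := (Finset.univ_sum_single v).symm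
    calc f v = f (∑ i, Pi.single i (v i)) := by rw [← hv]
      _ = ∑ i, f (Pi.single i (v i)) := map_sum f _ _
      _ = ∑ i, v i * lam i := Finset.sum_congr rfl fun i _ => by
          have hsingle : Pi.single i (v i) = v i • (Pi.single i 1 : Fin m → ℝ) := by
            funext j; by_cases hji : j = i <;> simp [Pi.single_apply, hji]
          rw [hsingle, _root_.map_smul, smul_eq_mul, hlam]
  set Ψ : Matrix (Fin n) (Fin n) ℝ := ∑ i, lam i • A i with hPsi
  have hΨtr : ∀ M : Matrix (Fin n) (Fin n) ℝ, (Ψ * M).trace = f (calA A M) := by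
    intro M
    rw [hfrep, hPsi, Matrix.sum_mul, Matrix.trace_sum]
    refine Finset.sum_congr rfl fun i _ => ?_
    rw [Matrix.smul_mul, Matrix.trace_smul, smul_eq_mul]
    simp only [calA]
    ring
  have key : ∀ Y : Matrix (Fin n) (Fin n) ℝ, Y.PosDef → (Ψ * Y).trace < f b :=
    fun Y hY => by rw [hΨtr]; exact hf _ ⟨Y, hY, rfl⟩
  have hfb : 0 ≤ f b := by
    by_contra hneg
    push_neg at hneg
    set t : ℝ := (-(f b)) / (2 * (|Ψ.trace| + 1)) with ht
    have htpos : 0 < t := div_pos (by linarith) (by positivity)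
    have h1 := key (t • 1) (pd_smul Matrix.PosDef.one htpos)
    rw [Matrix.mul_smul, Matrix.mul_one, Matrix.trace_smul, smul_eq_mul] at h1
    have h2 : t * (2 * (|Ψ.trace| + 1)) = -(f b) := by
      rw [ht]; field_simp
    nlinarith [h1, h2, htpos, mul_le_mul_of_nonneg_left (neg_abs_le Ψ.trace) htpos.le]
  have hPD : ∀ Y : Matrix (Fin n) (Fin n) ℝ, Y.PosDef → (Ψ * Y).trace ≤ 0 := by
    intro Y hY
    by_contra hpos
    push_neg at hpos
    set t : ℝ := (f b + 1) / (Ψ * Y).trace with ht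
    have htpos : 0 < t := div_pos (by linarith) hpos
    have h1 := key (t • Y) (pd_smul hY htpos)
    rw [Matrix.mul_smul, Matrix.trace_smul, smul_eq_mul] at h1
    have h2 : t * (Ψ * Y).trace = f b + 1 := by
      rw [ht]; field_simp
    linarith
  have hPSD : ∀ Y : Matrix (Fin n) (Fin n) ℝ, Y.PosSemidef → (Ψ * Y).trace ≤ 0 := by
    intro Y hY
    by_contra hpos
    push_neg at hpos
    set a : ℝ := (Ψ * Y).trace with ha
    set c : ℝ := Ψ.trace with hcdef
    set ε : ℝ := a / (2 * (|c| + 1)) with hε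
    have hεpos : 0 < ε := div_pos hpos (by positivity)
    have hpd : (Y + ε • 1).PosDef := Matrix.PosDef.posSemidef_add hY (pd_smul Matrix.PosDef.one hεpos)
    have h1 := hPD (Y + ε • 1) hpd
    rw [Matrix.mul_add, Matrix.mul_smul, Matrix.mul_one, Matrix.trace_add,
      Matrix.trace_smul, smul_eq_mul] at h1
    have h2 : ε * (2 * (|c| + 1)) = a := by
      rw [hε]; field_simp
    nlinarith [h1, h2, hεpos, mul_le_mul_of_nonneg_left (neg_abs_le c) hεpos.le]
  have hΨherm : Ψ.IsHermitian := herm_sum_smul hA _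
  have hnegΨ : (-Ψ).PosSemidef := by
    refine Matrix.PosSemidef.of_dotProduct_mulVec_nonneg hΨherm.neg fun x => ?_
    have h1 := hPSD (Matrix.vecMulVec x x) (psd_vecMulVec x)
    rw [trace_mul_vecMulVec] at h1
    rw [star_pi, Matrix.neg_mulVec, dotProduct_neg]
    linarith
  have e1 : (Ψ * X).trace = f b := by rw [hΨtr, hXb]
  have e2 : (X * -Ψ).trace = -(Ψ * X).trace := by
    rw [Matrix.mul_neg, Matrix.trace_neg, Matrix.trace_mul_comm]
  have e3 := trace_mul_nonneg hXpsd hnegΨ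
  have hfb0 : f b = 0 := by
    rw [e2, e1] at e3; linarith
  have htr : (X * -Ψ).trace = 0 := by rw [e2, e1, hfb0, neg_zero]
  have hmem := mem_conjFace_minFace hXpsd hnegΨ htr
  have hsp1 : -Ψ ∈ Submodule.span ℝ (conjFace (minFaceOfPoint X)) :=
    Submodule.subset_span hmem
  have hsp2 : -Ψ ∈ Submodule.span ℝ (Set.range A) := by
    refine Submodule.neg_mem _ ?_
    rw [hPsi]
    exact Submodule.sum_mem _ fun i _ =>
      Submodule.smul_mem _ _ (Submodule.subset_span ⟨i, rfl⟩)
  have hND' : Submodule.span ℝ (conjFace (minFaceOfPoint X)) ⊓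
      Submodule.span ℝ (Set.range A) = ⊥ := hND
  have hbot : -Ψ ∈ (⊥ : Submodule ℝ (Matrix (Fin n) (Fin n) ℝ)) := by
    rw [← hND']
    exact Submodule.mem_inf.mpr ⟨hsp1, hsp2⟩
  have hΨ0 : Ψ = 0 := neg_eq_zero.mp (Submodule.mem_bot ℝ |>.mp hbot)
  have h1 := key 1 Matrix.PosDef.one
  rw [hΨ0] at h1 e1
  simp only [Matrix.zero_mul, Matrix.trace_zero] at h1 e1
  rw [← e1] at h1
  exact lt_irrefl _ h1
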